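/- In the MEDR setting with single-minded agents whose cost for an allocation exceeding their declared size s_i is infinite, an exact allocation rule (each agent is allocated either exactly s_i or nothing) combined with critical payments yields a mechanism in which no agent can strictly benefit by misreporting either its size or its cost: for true type (e_i, c_i) and any report (s_i, b_i), U_i((e_i,c_i), B_{-i}) ≥ U_i((s_i,b_i), B_{-i}). -/
import Mathlib


/-- Truthfulness for single-minded agents in two dimensions (Theorem 4 of the paper):
fix the other agents' bids and consider agent `i` with true type `(e, c)`. The (exact)
allocation rule `win (s, b)` is monotone in the order (larger size, smaller cost), and
the payment is the critical value `θ s` in the cost coordinate: bids `b < θ s` win and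
bids `b > θ s` lose. An agent over-reporting its size (`s > e`) incurs infinite cost
(utility `⊥`); losers get utility `0`; a winner reporting `s ≤ e` gets `θ s − c`.
Then truthful reporting `(e, c)` dominates every report `(s, b)`. -/
theorem stmt_19 (win : ℝ × ℝ → Prop) [DecidablePred win]
    (hmono : ∀ r r' : ℝ × ℝ, r.1 ≤ r'.1 → r'.2 ≤ r.2 → win r → win r')
    (θ : ℝ → ℝ)
    (hθwin : ∀ s b : ℝ, b < θ s → win (s, b))
    (hθlose : ∀ s b : ℝ, θ s < b → ¬ win (s, b))
    (e c : ℝ) (he : 0 ≤ e) (hc : 0 ≤ c)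
    (u : ℝ × ℝ → EReal)
    (hu : ∀ r : ℝ × ℝ, u r =
      if win r then (if r.1 ≤ e then ((θ r.1 - c : ℝ) : EReal) else ⊥) else 0) :
    ∀ s b : ℝ, u (s, b) ≤ u (e, c) := by
  -- θ is monotone on sizes ≤ e
  have hθmono : ∀ s : ℝ, s ≤ e → θ s ≤ θ e := by
    intro s hs
    by_contra h
    push_neg at h
    set b := (θ e + θ s) / 2 with hb
    have h1 : θ e < b := by simp [hb]; linarith
    have h2 : b < θ s := by simp [hb]; linarith
    exact hθlose e b h1 (hmono (s, b) (e, b) hs le_rfl (hθwin s b h2))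
  -- u(e,c) ≥ θ e - c and u(e,c) ≥ 0
  have key : (0 : EReal) ≤ u (e, c) ∧ ((θ e - c : ℝ) : EReal) ≤ u (e, c) := by
    rw [hu (e, c)]
    by_cases hw : win (e, c)
    · rw [if_pos hw, if_pos (le_refl e : (e, c).1 ≤ e)]
      have : ¬ θ e < c := fun h => hθlose e c h hw
      constructor
      · exact EReal.coe_nonneg.mpr (by linarith)
      · exact le_rfl
    · simp only [hw, if_false]
      have : ¬ c < θ e := fun h => hw (hθwin e c h)
      exact ⟨le_rfl, EReal.coe_nonpos.mpr (by linarith)⟩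
  intro s b
  rw [hu (s, b)]
  by_cases hw : win (s, b)
  · simp only [hw, if_true]
    by_cases hs : s ≤ e
    · simp only [hs, if_pos]
      refine le_trans ?_ key.2
      exact EReal.coe_le_coe_iff.mpr (by have := hθmono s hs; linarith)
    · simp [hs]
  · simp only [hw, if_false]
    exact key.1
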